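/- Let k ≥ 1 and let p₁,…,p_k be generating polynomials of finite sets S₁,…,S_k ⊆ ℕ. Define a(t,u) = Σ_{i=1}^{k} p_i(t) u^i and b(t,u) = Σ_{i=0}^{k−1} u^i. Then the set of x with (x, k) in the Minkowski sum supp(a) ⊕ supp(b) ⊆ ℕ² equals S₁ ∪ ⋯ ∪ S_k. -/

import Mathlib

theorem minkowski_sum_encodes_union (k : ℕ) (hk : 1 ≤ k) (S : Fin k → Set ℕ) :
    {x : ℕ | (x, k) ∈ Set.image2 (· + ·)
        {p : ℕ × ℕ | ∃ i : Fin k, p.2 = (i : ℕ) + 1 ∧ p.1 ∈ S i}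
        {p : ℕ × ℕ | p.1 = 0 ∧ p.2 < k}} = ⋃ i, S i := by
  ext x
  simp only [Set.mem_setOf_eq, Set.mem_image2, Set.mem_iUnion]
  constructor
  · rintro ⟨⟨a1, a2⟩, ⟨i, rfl, hmem⟩, ⟨b1, b2⟩, ⟨rfl, hb2⟩, heq⟩
    simp only [Prod.mk.injEq, Prod.mk_add_mk, add_zero] at heq
    exact ⟨i, heq.1 ▸ hmem⟩
  · rintro ⟨i, hx⟩
    refine ⟨(x, (i : ℕ) + 1), ⟨i, rfl, hx⟩, (0, k - ((i : ℕ) + 1)), ⟨rfl, ?_⟩, ?_⟩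
    · omega
    · have : (i : ℕ) + 1 ≤ k := i.2
      simp [Prod.ext_iff]
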